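/- Support of a flow-invariant measure lies in the Birkhoff center (Proposition 5.4): Let X be a separable metric space and Ψ : ℝ → X → X a continuous flow, i.e. Ψ(0) = id, Ψ(t+s) = Ψ(t) ∘ Ψ(s) for all t,s ∈ ℝ, and (t,x) ↦ Ψ(t)x is continuous. Let μ be a Borel probability measure on X that is invariant under the flow: the pushforward of μ under Ψ(t) equals μ for every t ∈ ℝ. Then the topological support of μ is contained in the Birkhoff center B(Ψ) := closure{y ∈ X : y ∈ ω(y)}, where ω(y) := ⋂_{T ≥ 0} closure{Ψ(t)y : t ≥ T} is the omega-limit set of y. -/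

import Mathlib

open Filter Topology MeasureTheory

/-- **Support of a flow-invariant measure lies in the Birkhoff center**
(Proposition 5.4). For a continuous flow `Ψ` on a separable metric space and a
flow-invariant Borel probability measure `μ`, the topological support of `μ`
(the points all of whose open neighborhoods have positive measure) is contained
in the Birkhoff center `closure {y : y ∈ ω(y)}`, where
`ω(y) = ⋂_{T ≥ 0} closure {Ψ(t) y : t ≥ T}`. -/
theorem support_invariant_measure_subset_birkhoff_center
    {X : Type*} [MetricSpace X] [TopologicalSpace.SeparableSpace X]
    [MeasurableSpace X] [BorelSpace X]
    (Ψ : ℝ → X → X)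
    (h0 : Ψ 0 = id)
    (hflow : ∀ t s : ℝ, Ψ (t + s) = Ψ t ∘ Ψ s)
    (hcont : Continuous fun p : ℝ × X => Ψ p.1 p.2)
    (μ : Measure X) [IsProbabilityMeasure μ]
    (hinv : ∀ t : ℝ, Measure.map (Ψ t) μ = μ) :
    {x : X | ∀ U : Set X, IsOpen U → x ∈ U → 0 < μ U} ⊆
      closure {y : X | ∀ T : ℝ, 0 ≤ T →
        y ∈ closure ((fun t => Ψ t y) '' Set.Ici T)} := by
  set f : X → X := Ψ 1 with hf
  have hcont1 : Continuous f := by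
    have := hcont.comp (continuous_const.prodMk continuous_id : Continuous fun x : X => ((1:ℝ), x))
    exact this
  haveI : SecondCountableTopology X := UniformSpace.secondCountable_of_separable X
  have hmp : MeasurePreserving f μ μ := ⟨hcont1.measurable, hinv 1⟩
  have hcons : Conservative f μ := hmp.conservative
  have hiter : ∀ n : ℕ, f^[n] = Ψ (n : ℝ) := by
    intro n
    induction n with
    | zero => simp [h0]
    | succ n ih =>
      rw [Function.iterate_succ', ih]
      have : ((n : ℝ) + 1) = (1 : ℝ) + (n : ℝ) := by ring
      push_cast
      rw [this, hflow]
  set R : Set X := {y : X | ∀ T : ℝ, 0 ≤ T →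
      y ∈ closure ((fun t => Ψ t y) '' Set.Ici T)} with hR
  have hae : ∀ᵐ x ∂μ, x ∈ R := by
    filter_upwards [hcons.ae_frequently_mem_of_mem_nhds] with x hx
    intro T hT
    rw [Metric.mem_closure_iff]
    intro ε hε
    have hfreq := hx (Metric.ball x ε) (Metric.ball_mem_nhds x hε)
    obtain ⟨n, hball, hn⟩ := (hfreq.and_eventually (eventually_ge_atTop ⌈T⌉₊)).exists
    refine ⟨Ψ (n : ℝ) x, ⟨n, ?_, rfl⟩, ?_⟩
    · exact le_trans (Nat.le_ceil T) (by exact_mod_cast hn)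
    · rw [← hiter n]
      simpa [dist_comm] using hball
  have hμR : μ (closure R)ᶜ = 0 := by
    have : μ Rᶜ = 0 := by simpa [mem_ae_iff] using hae
    exact measure_mono_null (Set.compl_subset_compl.2 subset_closure) this
  intro x hx
  by_contra hxc
  have hpos := hx (closure R)ᶜ (isClosed_closure.isOpen_compl) hxc
  rw [hμR] at hpos
  exact lt_irrefl 0 hpos
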